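/- Let G = ℤ/2ℤ and, for n ≥ 2, let n̄ be the counts vector with n_{0̄} = n−1 and n_{1̄} = 1. Then E(n̄) = (4(n−1)³/n³) · (1 − 2/n + 2/n²)^{n−2}; in particular, E(n̄) → 4e^{−2} as n → ∞. -/

import Mathlib

open scoped Classical

noncomputable section

namespace CLPaper

open Matrix

/-- The matrix `B_n`: rows indexed by `[n]³`, columns by `[n]`;
the row of `(x₁,x₂,x₃)` is `e_{x₁} + e_{x₂} + e_{x₃}`. -/
def B (n : ℕ) : Matrix (Fin n × Fin n × Fin n) (Fin n) ℤ :=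
  fun x j => (if x.1 = j then 1 else 0) + (if x.2.1 = j then 1 else 0) +
    (if x.2.2 = j then 1 else 0)

/-- `det (B_n[K])` for an `n`-element subset `K` of `[n]³` (rows enumerated by a fixed
bijection; the quantities we consider do not depend on this choice), `0` otherwise. -/
def subdet (n : ℕ) (K : Finset (Fin n × Fin n × Fin n)) : ℤ :=
  if h : K.card = n then
    ((B n).submatrix
      (fun i : Fin n => ((K.equivFin.symm (Fin.cast h.symm i)) : Fin n × Fin n × Fin n))
      id).det
  else 0

/-- The cokernel `ℤ^n / (row span of the rows of `B_n` indexed by `K`)`. -/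
def cokK (n : ℕ) (K : Finset (Fin n × Fin n × Fin n)) : Type :=
  (Fin n → ℤ) ⧸ Submodule.span ℤ ((fun x => B n x) '' (K : Set (Fin n × Fin n × Fin n)))

instance (n : ℕ) (K : Finset (Fin n × Fin n × Fin n)) : AddCommGroup (cokK n K) :=
  inferInstanceAs (AddCommGroup ((Fin n → ℤ) ⧸ Submodule.span ℤ _))

/-- The `p`-Sylow subgroup of an abelian group: the subgroup of elements annihilated
by a power of `p`. -/
def sylow (p : ℕ) (A : Type*) [AddCommGroup A] : AddSubgroup A where
  carrier := {x | ∃ k : ℕ, p ^ k • x = 0}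
  zero_mem' := ⟨0, by simp⟩
  add_mem' := by
    rintro x y ⟨k, hk⟩ ⟨l, hl⟩
    refine ⟨k + l, ?_⟩
    rw [smul_add, pow_add, mul_comm, mul_smul, hk, smul_zero, mul_comm, mul_smul, hl,
      smul_zero, add_zero]
  neg_mem' := by
    rintro x ⟨k, hk⟩
    exact ⟨k, by rw [smul_neg, hk, neg_zero]⟩

/-- Number of surjective homomorphisms from `A` to `G`. -/
def numSur (A G : Type*) [AddCommGroup A] [AddCommGroup G] : ℕ :=
  Nat.card {f : A →+ G // Function.Surjective f}

variable {G : Type*} [AddCommGroup G] [Fintype G]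

/-- The submatrix `B_{n,q}` of `B_n` consisting of the rows indexed by
`I_q = {(x₁,x₂,x₃) : q_{x₁} + q_{x₂} + q_{x₃} = 0}`. -/
def Bq (n : ℕ) (q : Fin n → G) :
    Matrix {x : Fin n × Fin n × Fin n // q x.1 + q x.2.1 + q x.2.2 = 0} (Fin n) ℤ :=
  fun x j => B n x.1 j

/-- The Gram matrix `B_{n,q}ᵀ B_{n,q}`. -/
def gram (n : ℕ) (q : Fin n → G) : Matrix (Fin n) (Fin n) ℤ :=
  (Bq n q)ᵀ * Bq n q

/-- `n_a(q) = #{i : q_i = a}`. -/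
def cnt {n : ℕ} (q : Fin n → G) (a : G) : ℕ :=
  (Finset.univ.filter (fun i => q i = a)).card

/-- `m_a = ∑_b n_b n_{-a-b}` associated to a counts vector `n̄ : G → ℕ`. -/
def mOf (nbar : G → ℕ) (a : G) : ℕ :=
  ∑ b : G, nbar b * nbar (-a - b)

/-- The matrix `M` indexed by `G₊ = {a : n_a > 0}`, with
`M(a,a) = 2 n_a n_{-2a} + m_a` and `M(a,b) = 2 √(n_a n_b) n_{-a-b}` for `a ≠ b`. -/
def Mmat (nbar : G → ℕ) :
    Matrix {a : G // 0 < nbar a} {a : G // 0 < nbar a} ℝ :=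
  fun a b =>
    if (a : G) = (b : G) then
      2 * (nbar (a : G) : ℝ) * (nbar (-(2 • (a : G))) : ℝ) + (mOf nbar (a : G) : ℝ)
    else
      2 * Real.sqrt ((nbar (a : G) : ℝ) * (nbar (b : G) : ℝ)) * (nbar (-(a : G) - b) : ℝ)

/-- The set `S(n̄)` of vectors `q ∈ G^n` with the prescribed counts. -/
def Sset (n : ℕ) (nbar : G → ℕ) : Finset (Fin n → G) :=
  Finset.univ.filter (fun q => ∀ a : G, cnt q a = nbar a)

/-- `E(n̄) = ∑_{q ∈ S(n̄)} det(B_{n,q}ᵀ B_{n,q}) / (3^{n+1} n^{2n})`. -/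
def Eval (n : ℕ) (nbar : G → ℕ) : ℝ :=
  (∑ q ∈ Sset n nbar, ((gram n q).det : ℝ)) / ((3 : ℝ) ^ (n + 1) * (n : ℝ) ^ (2 * n))

/-- Kullback–Leibler divergence of two probability vectors on `G` (natural log;
terms with `ν a = 0` contribute `0`). -/
def klDiv (ν μ : G → ℝ) : ℝ :=
  ∑ a : G, if ν a = 0 then 0 else ν a * Real.log (ν a / μ a)

/-- `ν_{n̄}(a) = n_a / n`. -/
def nuOf (n : ℕ) (nbar : G → ℕ) : G → ℝ := fun a => (nbar a : ℝ) / n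

/-- `μ_{n̄}(a) = m_a / n²`. -/
def muOf (n : ℕ) (nbar : G → ℕ) : G → ℝ := fun a => (mOf nbar a : ℝ) / (n : ℝ) ^ 2

/-- `t_n = 2C √(|G| n log n)`. -/
def tSeq (G : Type*) [Fintype G] (C : ℝ) (n : ℕ) : ℝ :=
  2 * C * Real.sqrt ((Fintype.card G) * n * Real.log n)

/-- `r_n = 4C |G| log n`. -/
def rSeq (G : Type*) [Fintype G] (C : ℝ) (n : ℕ) : ℝ :=
  4 * C * (Fintype.card G) * Real.log n

/-- `n̄ ∈ D_n`: the counts sum to `n` and the support generates `G`. -/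
def memD (n : ℕ) (nbar : G → ℕ) : Prop :=
  (∑ a : G, nbar a = n) ∧ AddSubgroup.closure {a : G | 0 < nbar a} = ⊤

/-- `n̄ ∈ D_n'`: moreover `m_a > 0` for all `a ∈ G₊`. -/
def memD' (n : ℕ) (nbar : G → ℕ) : Prop :=
  memD n nbar ∧ ∀ a : G, 0 < nbar a → 0 < mOf nbar a

/-- `u_H(g) = 1/|H|` for `g ∈ H` and `0` otherwise. -/
def uH (H : AddSubgroup G) : G → ℝ :=
  fun g => if g ∈ H then (Nat.card H : ℝ)⁻¹ else 0

/-- `n̄ ∈ B(n,H)`. -/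
def memB (C : ℝ) (n : ℕ) (H : AddSubgroup G) (nbar : G → ℕ) : Prop :=
  memD' n nbar ∧ (∀ a : G, |(nbar a : ℝ) - n * uH H a| ≤ tSeq G C n) ∧
    (∑ a ∈ Finset.univ.filter (fun a : G => a ∉ H), (nbar a : ℝ)) ≤ rSeq G C n

end CLPaper

open CLPaper Filter

namespace CLAux

open Finset

variable {n : ℕ}

def h (j i : Fin n) : ℤ := if i = j then 1 else 0

def g (s i : Fin n) : ℤ := 1 - 2 * h s i

lemma sum_h (j : Fin n) : ∑ i, h j i = 1 := by simp [h]

lemma sum_hh (j k : Fin n) : ∑ i, h j i * h k i = h k j := by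
  have : ∀ i, h j i * h k i = if i = j then h k j else 0 := by
    intro i
    unfold h
    rcases eq_or_ne i j with rfl | hij
    · simp
    · simp [hij]
  simp [this]

lemma sum_g (s : Fin n) : ∑ i, g s i = (n : ℤ) - 2 := by
  simp only [g, Finset.sum_sub_distrib, ← Finset.mul_sum, sum_h]
  simp [mul_comm]

lemma sum_hg (s j : Fin n) : ∑ i, h j i * g s i = g s j := by
  have : ∀ i, h j i * g s i = if i = j then g s j else 0 := by
    intro i
    unfold h
    rcases eq_or_ne i j with rfl | hij
    · simp
    · simp [hij]
  simp [this]

lemma sum_hhg (s j k : Fin n) : ∑ i, h j i * h k i * g s i = h k j * g s j := by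
  have : ∀ i, h j i * h k i * g s i = if i = j then h k j * g s j else 0 := by
    intro i
    unfold h
    rcases eq_or_ne i j with rfl | hij
    · simp
    · simp [hij]
  simp [this]

lemma tsf (F G H : Fin n → ℤ) :
    ∑ x : Fin n × Fin n × Fin n, F x.1 * G x.2.1 * H x.2.2
      = (∑ i, F i) * (∑ i, G i) * (∑ i, H i) := by
  rw [Fintype.sum_prod_type]
  simp only [Fintype.sum_prod_type]
  simp only [← Finset.mul_sum, ← Finset.sum_mul, mul_assoc]

lemma master (u v w : Fin n → ℤ) :
    ∑ x : Fin n × Fin n × Fin n,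
      (u x.1 + u x.2.1 + u x.2.2) * (v x.1 + v x.2.1 + v x.2.2) *
        (w x.1 * w x.2.1 * w x.2.2)
    = 3 * (∑ i, u i * v i * w i) * (∑ i, w i) ^ 2
      + 6 * ((∑ i, u i * w i) * (∑ i, v i * w i) * (∑ i, w i)) := by
  have expand : ∀ x : Fin n × Fin n × Fin n,
      (u x.1 + u x.2.1 + u x.2.2) * (v x.1 + v x.2.1 + v x.2.2) *
        (w x.1 * w x.2.1 * w x.2.2)
      = (u x.1 * v x.1 * w x.1) * w x.2.1 * w x.2.2
        + (u x.1 * w x.1) * (v x.2.1 * w x.2.1) * w x.2.2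
        + (u x.1 * w x.1) * w x.2.1 * (v x.2.2 * w x.2.2)
        + (v x.1 * w x.1) * (u x.2.1 * w x.2.1) * w x.2.2
        + w x.1 * (u x.2.1 * v x.2.1 * w x.2.1) * w x.2.2
        + w x.1 * (u x.2.1 * w x.2.1) * (v x.2.2 * w x.2.2)
        + (v x.1 * w x.1) * w x.2.1 * (u x.2.2 * w x.2.2)
        + w x.1 * (v x.2.1 * w x.2.1) * (u x.2.2 * w x.2.2)
        + w x.1 * w x.2.1 * (u x.2.2 * v x.2.2 * w x.2.2) := by
    intro x; ring
  rw [Finset.sum_congr rfl (fun x _ => expand x)]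
  simp only [Finset.sum_add_distrib]
  have e1 := tsf (fun i => u i * v i * w i) w w
  have e2 := tsf (fun i => u i * w i) (fun i => v i * w i) w
  have e3 := tsf (fun i => u i * w i) w (fun i => v i * w i)
  have e4 := tsf (fun i => v i * w i) (fun i => u i * w i) w
  have e5 := tsf w (fun i => u i * v i * w i) w
  have e6 := tsf w (fun i => u i * w i) (fun i => v i * w i)
  have e7 := tsf (fun i => v i * w i) w (fun i => u i * w i)
  have e8 := tsf w (fun i => v i * w i) (fun i => u i * w i)
  have e9 := tsf w w (fun i => u i * v i * w i)
  rw [e1, e2, e3, e4, e5, e6, e7, e8, e9]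
  ring


open CLPaper Matrix Finset

def Mex (n : ℕ) (s : Fin n) : Matrix (Fin n) (Fin n) ℤ :=
  fun j k => if j = k then (if j = s then 12 * ((n : ℤ) - 1) else 3 * (n : ℤ) ^ 2)
    else if j = s ∨ k = s then 6 else 6 * ((n : ℤ) - 1)

lemma master1 {n : ℕ} (u v : Fin n → ℤ) :
    ∑ x : Fin n × Fin n × Fin n,
      (u x.1 + u x.2.1 + u x.2.2) * (v x.1 + v x.2.1 + v x.2.2)
    = 3 * (∑ i, u i * v i) * (n : ℤ) ^ 2
      + 6 * ((∑ i, u i) * (∑ i, v i) * (n : ℤ)) := by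
  have := master u v (fun _ => 1)
  simpa using this

lemma indicator_key {n : ℕ} (s : Fin n) (x : Fin n × Fin n × Fin n) (z : ℤ) :
    2 * (if (if x.1 = s then (1 : ZMod 2) else 0) + (if x.2.1 = s then (1 : ZMod 2) else 0)
          + (if x.2.2 = s then (1 : ZMod 2) else 0) = 0 then z else 0)
    = (1 + g s x.1 * g s x.2.1 * g s x.2.2) * z := by
  obtain ⟨a, b, c⟩ := x
  have d1 : (1 : ZMod 2) + 1 = 0 := by decide
  have d2 : (1 : ZMod 2) ≠ 0 := by decide
  simp only [g, h]
  rcases eq_or_ne a s with h1 | h1 <;> rcases eq_or_ne b s with h2 | h2 <;>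
    rcases eq_or_ne c s with h3 | h3 <;>
      simp [h1, h2, h3, d1, d2]

lemma sum_subtype_univ {α : Type*} [Fintype α] {p : α → Prop} [F : Fintype {x // p x}]
    [DecidablePred p] (f : α → ℤ) :
    ∑ x : {x // p x}, f x.1 = ∑ x ∈ Finset.univ.filter p, f x := by
  have hF : F = Subtype.fintype p := Subsingleton.elim _ _
  subst hF
  exact (Finset.sum_subtype _ (fun x => by simp) f).symm

lemma gram_eq (n : ℕ) (s : Fin n) :
    gram n (fun i => if i = s then (1 : ZMod 2) else 0) = Mex n s := by
  ext j k
  set q : Fin n → ZMod 2 := fun i => if i = s then (1 : ZMod 2) else 0 with hqdef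
  have step1 : gram n q j k
      = ∑ x ∈ univ.filter (fun x : Fin n × Fin n × Fin n => q x.1 + q x.2.1 + q x.2.2 = 0),
          B n x j * B n x k := by
    simp only [CLPaper.gram, Matrix.mul_apply, Matrix.transpose_apply, Bq]
    have e := sum_subtype_univ
      (p := fun x : Fin n × Fin n × Fin n => q x.1 + q x.2.1 + q x.2.2 = 0)
      (fun x => B n x j * B n x k)
    convert e using 3
  have key : 2 * gram n q j k
      = ∑ x : Fin n × Fin n × Fin n,
          (1 + g s x.1 * g s x.2.1 * g s x.2.2) * (B n x j * B n x k) := by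
    rw [step1, Finset.sum_filter, Finset.mul_sum]
    refine Finset.sum_congr rfl fun x _ => ?_
    exact indicator_key s x (B n x j * B n x k)
  have hB : ∀ (x : Fin n × Fin n × Fin n) (j : Fin n),
      B n x j = h j x.1 + h j x.2.1 + h j x.2.2 := fun x j => rfl
  have split : 2 * gram n q j k
      = (∑ x : Fin n × Fin n × Fin n,
          (h j x.1 + h j x.2.1 + h j x.2.2) * (h k x.1 + h k x.2.1 + h k x.2.2))
        + ∑ x : Fin n × Fin n × Fin n,
          (h j x.1 + h j x.2.1 + h j x.2.2) * (h k x.1 + h k x.2.1 + h k x.2.2) *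
            (g s x.1 * g s x.2.1 * g s x.2.2) := by
    rw [key, ← Finset.sum_add_distrib]
    refine Finset.sum_congr rfl fun x _ => ?_
    rw [hB x j, hB x k]; ring
  rw [master (h j) (h k) (g s), master1 (h j) (h k)] at split
  simp only [sum_hh, sum_h, sum_hhg, sum_g, sum_hg] at split
  refine mul_left_cancel₀ (two_ne_zero (α := ℤ)) ?_
  rw [split]
  simp only [Mex, h, g]
  rcases eq_or_ne j k with hjk | hjk
  · rcases eq_or_ne j s with hjs | hjs
    · rcases eq_or_ne k s with hks | hks
      · simp [hjk, hks]; ring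
      · exact absurd (hjk.symm.trans hjs) hks
    · rcases eq_or_ne k s with hks | hks
      · exact absurd (hjk.trans hks) hjs
      · simp [hjk, hks]; ring
  · rcases eq_or_ne j s with hjs | hjs
    · rcases eq_or_ne k s with hks | hks
      · exact absurd (hjs.trans hks.symm) hjk
      · simp [hjs, hks, Ne.symm hks]; ring
    · rcases eq_or_ne k s with hks | hks
      · simp [hks, hjs]; ring
      · simp [hjk, hjs, hks]; ring

lemma sum_affine {n : ℕ} (c d : ℝ) (s : Fin n) :
    ∑ j : Fin n, (c + d * (if j = s then (1 : ℝ) else 0)) = n * c + d := by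
  rw [Finset.sum_add_distrib]
  simp [Finset.sum_ite_eq', mul_comm]

lemma det_Mex (n : ℕ) (hn : 2 ≤ n) (s : Fin n) :
    ((Mex n s).det : ℝ)
      = 108 * ((n : ℝ) - 1) ^ 3 * (3 * ((n : ℝ) ^ 2 - 2 * n + 2)) ^ (n - 2) := by
  have hcast : ((Mex n s).det : ℝ) = ((Mex n s).map (Int.cast : ℤ → ℝ)).det := by
    have := RingHom.map_det (Int.castRingHom ℝ) (Mex n s)
    simpa using this
  set t : ℝ := 3 * ((n : ℝ) ^ 2 - 2 * n + 2) with ht_def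
  have ht0 : 0 < t := by
    have : t = 3 * (((n : ℝ) - 1) ^ 2 + 1) := by rw [ht_def]; ring
    rw [this]; positivity
  have ht : t ≠ 0 := ne_of_gt ht0
  set b : ℝ := 6 * ((n : ℝ) - 1) with hb_def
  set ga : ℝ := 12 - 6 * (n : ℝ) with hga_def
  set de : ℝ := -3 * (n : ℝ) ^ 2 + 24 * n - 36 with hde_def
  set U : Matrix (Fin n) (Fin 2) ℝ :=
    fun i p => if p = 0 then 1 else (if i = s then 1 else 0) with hU_def
  set V : Matrix (Fin 2) (Fin n) ℝ :=
    fun p j => if p = 0 then b + ga * (if j = s then 1 else 0)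
      else ga + de * (if j = s then 1 else 0) with hV_def
  have hUV : (Mex n s).map (Int.cast : ℤ → ℝ) = t • 1 + U * V := by
    ext j k
    rw [Matrix.add_apply, Matrix.mul_apply]
    simp only [Matrix.map_apply, Mex, Matrix.add_apply, Matrix.smul_apply, Matrix.one_apply,
      Matrix.mul_apply, Fin.sum_univ_two, hU_def, hV_def, smul_eq_mul]
    rcases eq_or_ne j k with hjk | hjk
    · rcases eq_or_ne k s with hks | hks
      · simp [hjk, hks] <;> (push_cast; ring)
      · simp [hjk, hks] <;> (push_cast; ring)
    · rcases eq_or_ne j s with hjs | hjs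
      · rcases eq_or_ne k s with hks | hks
        · exact absurd (hjs.trans hks.symm) hjk
        · simp [hjk, hjs, hks, Ne.symm hks] <;> (push_cast; ring)
      · rcases eq_or_ne k s with hks | hks
        · simp [hjk, hjs, hks] <;> (push_cast; ring)
        · simp [hjk, hjs, hks] <;> (push_cast; ring)
  have hfact : t • ((1 : Matrix (Fin n) (Fin n) ℝ) + (t⁻¹ • U) * V) = t • 1 + U * V := by
    rw [smul_add, Matrix.smul_mul, smul_smul, mul_inv_cancel₀ ht, one_smul]
  have hdet1 : ((Mex n s).map (Int.cast : ℤ → ℝ)).det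
      = t ^ n * ((1 : Matrix (Fin n) (Fin n) ℝ) + (t⁻¹ • U) * V).det := by
    rw [hUV, ← hfact, Matrix.det_smul, Fintype.card_fin]
  have hcomm : ((1 : Matrix (Fin n) (Fin n) ℝ) + (t⁻¹ • U) * V).det
      = ((1 : Matrix (Fin 2) (Fin 2) ℝ) + V * (t⁻¹ • U)).det :=
    Matrix.det_one_add_mul_comm _ _
  have hW : (1 : Matrix (Fin 2) (Fin 2) ℝ) + V * (t⁻¹ • U)
      = !![1 + t⁻¹ * ((n : ℝ) * b + ga), t⁻¹ * (b + ga);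
          t⁻¹ * ((n : ℝ) * ga + de), 1 + t⁻¹ * (ga + de)] := by
    ext p q
    rw [Matrix.add_apply, Matrix.mul_apply]
    simp only [Matrix.smul_apply]
    have hsum : ∀ c d : ℝ, ∑ x : Fin n, (c + if x = s then d else 0) = n * c + d := by
      intro c d
      rw [Finset.sum_add_distrib]
      simp [Finset.sum_ite_eq', mul_comm]
    fin_cases p <;> fin_cases q <;>
      simp only [Matrix.add_apply, Matrix.one_apply, Matrix.mul_apply, Matrix.smul_apply,
        hU_def, hV_def, smul_eq_mul, Matrix.cons_val', Matrix.cons_val_zero, Matrix.cons_val_one,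
        Matrix.head_cons, Matrix.head_fin_const, Matrix.empty_val', Matrix.cons_val_fin_one,
        Matrix.of_apply, Pi.smul_apply] <;>
      norm_num
    all_goals first
      | (rw [← Finset.sum_mul, hsum b ga]; ring)
      | (rw [← Finset.sum_mul, hsum ga de]; ring)
      | ring
  have h2 : ((1 : Matrix (Fin 2) (Fin 2) ℝ) + V * (t⁻¹ • U)).det
      = (1 + t⁻¹ * ((n : ℝ) * b + ga)) * (1 + t⁻¹ * (ga + de))
        - t⁻¹ * (b + ga) * (t⁻¹ * ((n : ℝ) * ga + de)) := by
    rw [hW, Matrix.det_fin_two_of]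
  obtain ⟨m, rfl⟩ : ∃ m, n = m + 2 := ⟨n - 2, by omega⟩
  rw [hcast, hdet1, hcomm, h2]
  have hpow : t ^ (m + 2) = t ^ m * t ^ 2 := by ring
  have hm2 : m + 2 - 2 = m := by omega
  rw [hpow, hm2]
  have key : t ^ 2 * ((1 + t⁻¹ * ((↑(m + 2) : ℝ) * b + ga)) * (1 + t⁻¹ * (ga + de))
        - t⁻¹ * (b + ga) * (t⁻¹ * ((↑(m + 2) : ℝ) * ga + de)))
      = 108 * ((↑(m + 2) : ℝ) - 1) ^ 3 := by
    have expand : ∀ X Y Z W : ℝ,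
        t ^ 2 * ((1 + t⁻¹ * X) * (1 + t⁻¹ * Y) - t⁻¹ * Z * (t⁻¹ * W))
          = (t + X) * (t + Y) - Z * W := by
      intro X Y Z W
      field_simp
    rw [expand, ht_def, hb_def, hga_def, hde_def]
    push_cast
    ring
  calc t ^ m * t ^ 2 * ((1 + t⁻¹ * ((↑(m + 2) : ℝ) * b + ga)) * (1 + t⁻¹ * (ga + de))
        - t⁻¹ * (b + ga) * (t⁻¹ * ((↑(m + 2) : ℝ) * ga + de)))
      = t ^ m * (t ^ 2 * ((1 + t⁻¹ * ((↑(m + 2) : ℝ) * b + ga)) * (1 + t⁻¹ * (ga + de))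
        - t⁻¹ * (b + ga) * (t⁻¹ * ((↑(m + 2) : ℝ) * ga + de)))) := by ring
    _ = t ^ m * (108 * ((↑(m + 2) : ℝ) - 1) ^ 3) := by rw [key]
    _ = 108 * ((↑(m + 2) : ℝ) - 1) ^ 3 * t ^ m := by ring

def ind (n : ℕ) (s : Fin n) : Fin n → ZMod 2 := fun i => if i = s then 1 else 0

lemma ind_inj (n : ℕ) : Function.Injective (ind n) := by
  intro s s' hss
  have := congrFun hss s
  simp only [ind, if_pos rfl] at this
  by_contra hne
  rw [if_neg hne] at this
  exact (show (1 : ZMod 2) ≠ 0 by decide) this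

lemma cnt_eq {n : ℕ} (q : Fin n → ZMod 2) (a : ZMod 2) :
    cnt q a = (Finset.univ.filter (fun i => q i = a)).card := by
  rw [cnt]
  congr 1
  exact Finset.filter_congr_decidable _ _ _

lemma Sset_eq (n : ℕ) (hn : 2 ≤ n) :
    Sset n (fun a : ZMod 2 => if a = 0 then n - 1 else 1)
      = Finset.univ.image (ind n) := by
  have hzmod : ∀ a : ZMod 2, a = 0 ∨ a = 1 := by decide
  have h10 : (1 : ZMod 2) ≠ 0 := by decide
  ext q
  simp only [Sset, Finset.mem_filter, Finset.mem_univ, true_and, Finset.mem_image]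
  constructor
  · intro hq
    have h1 := hq 1
    rw [if_neg h10, cnt_eq] at h1
    obtain ⟨s, hs⟩ := Finset.card_eq_one.mp h1
    have hmem : ∀ i, q i = 1 ↔ i = s := by
      intro i
      have : i ∈ Finset.univ.filter (fun i => q i = 1) ↔ i ∈ ({s} : Finset (Fin n)) := by
        rw [hs]
      simpa using this
    refine ⟨s, ?_⟩
    funext i
    rcases hzmod (q i) with h0 | h1'
    · have his : i ≠ s := fun e => h10 (((hmem i).mpr e ▸ h0 : (1 : ZMod 2) = 0))
      rw [ind, if_neg his, h0]
    · rw [ind, if_pos ((hmem i).mp h1'), h1']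
  · rintro ⟨s, -, rfl⟩ a
    rcases hzmod a with rfl | rfl
    · rw [if_pos rfl, cnt_eq]
      have : Finset.univ.filter (fun i => ind n s i = 0) = Finset.univ.erase s := by
        ext i
        simp only [Finset.mem_filter, Finset.mem_univ, true_and, Finset.mem_erase, and_true]
        constructor
        · intro hi e
          rw [ind, if_pos e] at hi
          exact h10 hi
        · intro hi
          rw [ind, if_neg hi]
      rw [this, Finset.card_erase_of_mem (Finset.mem_univ _), Finset.card_univ,
        Fintype.card_fin]
    · rw [if_neg h10, cnt_eq]
      have : Finset.univ.filter (fun i => ind n s i = 1) = {s} := by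
        ext i
        simp only [Finset.mem_filter, Finset.mem_univ, true_and, Finset.mem_singleton]
        constructor
        · intro hi
          by_contra hne
          rw [ind, if_neg hne] at hi
          exact h10 hi.symm
        · intro hi
          rw [ind, if_pos hi]
      rw [this, Finset.card_singleton]

lemma Eval_formula (n : ℕ) (hn : 2 ≤ n) :
    Eval n (fun a : ZMod 2 => if a = 0 then n - 1 else 1)
      = (4 * ((n : ℝ) - 1) ^ 3 / (n : ℝ) ^ 3) *
          (1 - 2 / (n : ℝ) + 2 / (n : ℝ) ^ 2) ^ (n - 2) := by
  have hn0 : (0 : ℝ) < (n : ℝ) := by positivity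
  rw [Eval, Sset_eq n hn, Finset.sum_image (fun a _ b _ hab => ind_inj n hab)]
  have hterm : ∀ s : Fin n, ((gram n (ind n s)).det : ℝ)
      = 108 * ((n : ℝ) - 1) ^ 3 * (3 * ((n : ℝ) ^ 2 - 2 * n + 2)) ^ (n - 2) := by
    intro s
    rw [show gram n (ind n s) = Mex n s from gram_eq n s, det_Mex n hn s]
  rw [Finset.sum_congr rfl (fun s _ => hterm s), Finset.sum_const, Finset.card_univ,
    Fintype.card_fin, nsmul_eq_mul]
  obtain ⟨m, rfl⟩ : ∃ m, n = m + 2 := ⟨n - 2, by omega⟩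
  have hm2 : m + 2 - 2 = m := by omega
  rw [hm2]
  have hbase : (1 - 2 / ((m + 2 : ℕ) : ℝ) + 2 / ((m + 2 : ℕ) : ℝ) ^ 2)
      = (((m + 2 : ℕ) : ℝ) ^ 2 - 2 * ((m + 2 : ℕ) : ℝ) + 2) / ((m + 2 : ℕ) : ℝ) ^ 2 := by
    field_simp
  rw [hbase, div_pow, mul_pow]
  rw [show 2 * (m + 2) = 2 * m + 4 from by omega]
  have hnn : ((m + 2 : ℕ) : ℝ) ≠ 0 := ne_of_gt hn0
  have hp1 : ((m + 2 : ℕ) : ℝ) ^ (2 * m + 4) = (((m + 2 : ℕ) : ℝ) ^ 2) ^ m * ((m + 2 : ℕ) : ℝ) ^ 4 := by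
    rw [pow_add, pow_mul]
  have hp2 : (3 : ℝ) ^ (m + 2 + 1) = 3 ^ m * 27 := by
    rw [show m + 2 + 1 = m + 3 from rfl, pow_add]; norm_num
  rw [hp1, hp2]
  have h3 : (3 : ℝ) ^ m ≠ 0 := by positivity
  have h4 : (((m + 2 : ℕ) : ℝ) ^ 2) ^ m ≠ 0 := by positivity
  field_simp
  ring

open Filter Topology

lemma xlim : Tendsto (fun n : ℕ => -2 / (n : ℝ) + 2 / (n : ℝ) ^ 2) atTop (nhds 0) := by
  have h1n : Tendsto (fun n : ℕ => 1 / (n : ℝ)) atTop (nhds 0) :=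
    tendsto_one_div_atTop_nhds_zero_nat
  have heq : (fun n : ℕ => -2 / (n : ℝ) + 2 / (n : ℝ) ^ 2)
      = fun n : ℕ => (-2) * (1 / (n : ℝ)) + 2 * ((1 / (n : ℝ)) * (1 / (n : ℝ))) := by
    funext n; ring
  rw [heq]
  have := (h1n.const_mul (-2)).add ((h1n.mul h1n).const_mul 2)
  simpa using this

lemma xneg {n : ℕ} (hn : 2 ≤ n) : -2 / (n : ℝ) + 2 / (n : ℝ) ^ 2 < 0 := by
  have hn0 : (0 : ℝ) < (n : ℝ) := by
    have : (0 : ℕ) < n := by omega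
    exact_mod_cast this
  have hn2 : (2 : ℝ) ≤ (n : ℝ) := by exact_mod_cast hn
  have heq : -2 / (n : ℝ) + 2 / (n : ℝ) ^ 2 = (2 - 2 * (n : ℝ)) / (n : ℝ) ^ 2 := by
    field_simp; ring
  rw [heq]
  apply div_neg_of_neg_of_pos
  · linarith
  · positivity

lemma slopelim : Tendsto
    (fun n : ℕ => Real.log (1 + (-2 / (n : ℝ) + 2 / (n : ℝ) ^ 2))
      / (-2 / (n : ℝ) + 2 / (n : ℝ) ^ 2)) atTop (nhds 1) := by
  have hlog : HasDerivAt Real.log 1 1 := by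
    simpa using Real.hasDerivAt_log one_ne_zero
  have hslope := hasDerivAt_iff_tendsto_slope.mp hlog
  have hy : Tendsto (fun n : ℕ => 1 + (-2 / (n : ℝ) + 2 / (n : ℝ) ^ 2)) atTop (𝓝[≠] 1) := by
    rw [tendsto_nhdsWithin_iff]
    constructor
    · simpa using tendsto_const_nhds.add xlim
    · filter_upwards [eventually_ge_atTop 2] with n hn
      simp only [Set.mem_compl_iff, Set.mem_singleton_iff]
      intro he
      have hx0 : -2 / (n : ℝ) + 2 / (n : ℝ) ^ 2 = 0 := by linarith
      linarith [xneg hn]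
  have hcomp := hslope.comp hy
  refine hcomp.congr fun n => ?_
  simp only [Function.comp_apply]
  rw [slope_def_field, Real.log_one]
  simp

lemma prodlim : Tendsto (fun n : ℕ => ((n : ℝ) - 2) * (-2 / (n : ℝ) + 2 / (n : ℝ) ^ 2))
    atTop (nhds (-2)) := by
  have h1n : Tendsto (fun n : ℕ => 1 / (n : ℝ)) atTop (nhds 0) :=
    tendsto_one_div_atTop_nhds_zero_nat
  have hlim : Tendsto (fun n : ℕ => -2 + 6 * (1 / (n : ℝ)) - 4 * ((1 / (n : ℝ)) * (1 / (n : ℝ))))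
      atTop (nhds (-2)) := by
    have := (tendsto_const_nhds (x := (-2 : ℝ)) (f := atTop (α := ℕ))).add
      (h1n.const_mul 6) |>.sub ((h1n.mul h1n).const_mul 4)
    simpa using this
  refine hlim.congr' ?_
  filter_upwards [eventually_ge_atTop 1] with n hn
  have hn0 : ((n : ℝ)) ≠ 0 := by
    have : (0 : ℕ) < n := by omega
    positivity
  field_simp
  ring

lemma explim : Tendsto
    (fun n : ℕ => (1 - 2 / (n : ℝ) + 2 / (n : ℝ) ^ 2) ^ (n - 2))
    atTop (nhds (Real.exp (-2))) := by
  have hC : Tendsto (fun n : ℕ => ((n - 2 : ℕ) : ℝ)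
      * Real.log (1 + (-2 / (n : ℝ) + 2 / (n : ℝ) ^ 2))) atTop (nhds (-2)) := by
    have := prodlim.mul slopelim
    rw [show (-2 : ℝ) * 1 = -2 by ring] at this
    refine this.congr' ?_
    filter_upwards [eventually_ge_atTop 2] with n hn
    have hx := (xneg hn).ne
    have key : ∀ (a L x : ℝ), x ≠ 0 → a * x * (L / x) = a * L := by
      intro a L x hx0
      field_simp
    rw [Nat.cast_sub hn]
    push_cast
    exact key _ _ _ hx
  have hcomp := (Real.continuous_exp.tendsto (-2)).comp hC
  refine hcomp.congr' ?_
  filter_upwards [eventually_ge_atTop 2] with n hn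
  have hn0 : (0 : ℝ) < (n : ℝ) := by
    have : (0 : ℕ) < n := by omega
    exact_mod_cast this
  have hpos : 0 < 1 + (-2 / (n : ℝ) + 2 / (n : ℝ) ^ 2) := by
    have heq : 1 + (-2 / (n : ℝ) + 2 / (n : ℝ) ^ 2)
        = (((n : ℝ) - 1) ^ 2 + 1) / (n : ℝ) ^ 2 := by
      field_simp; ring
    rw [heq]; positivity
  show Real.exp (((n - 2 : ℕ) : ℝ) * Real.log (1 + (-2 / (n : ℝ) + 2 / (n : ℝ) ^ 2)))
      = (1 - 2 / (n : ℝ) + 2 / (n : ℝ) ^ 2) ^ (n - 2)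
  rw [Real.exp_nat_mul, Real.exp_log hpos]
  congr 1
  ring

lemma cubelim : Tendsto (fun n : ℕ => 4 * ((n : ℝ) - 1) ^ 3 / (n : ℝ) ^ 3)
    atTop (nhds 4) := by
  have h1n : Tendsto (fun n : ℕ => 1 / (n : ℝ)) atTop (nhds 0) :=
    tendsto_one_div_atTop_nhds_zero_nat
  have hlim : Tendsto (fun n : ℕ => 4 * (1 - 1 / (n : ℝ)) ^ 3) atTop (nhds 4) := by
    have := ((tendsto_const_nhds (x := (1 : ℝ)) (f := atTop (α := ℕ))).sub h1n).pow 3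
      |>.const_mul 4
    simpa using this
  refine hlim.congr' ?_
  filter_upwards [eventually_ge_atTop 1] with n hn
  have hn0 : ((n : ℝ)) ≠ 0 := by
    have : (0 : ℕ) < n := by omega
    positivity
  field_simp


lemma limit_part : Tendsto (fun n : ℕ => Eval n (fun a : ZMod 2 => if a = 0 then n - 1 else 1))
    atTop (nhds (4 * Real.exp (-2))) := by
  refine Tendsto.congr' ?_ (cubelim.mul explim)
  filter_upwards [eventually_ge_atTop 2] with n hn
  exact (Eval_formula n hn).symm
end CLAux

open CLPaper Filter

/-- For `G = ℤ/2ℤ` and the counts vector `n_{0̄} = n-1`, `n_{1̄} = 1`, one has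
`E(n̄) = (4(n-1)³/n³)(1 - 2/n + 2/n²)^{n-2}`, which tends to `4e^{-2}`. -/
theorem Eval_zmod_two :
    (∀ n : ℕ, 2 ≤ n →
      Eval n (fun a : ZMod 2 => if a = 0 then n - 1 else 1)
        = (4 * ((n : ℝ) - 1) ^ 3 / (n : ℝ) ^ 3) *
            (1 - 2 / (n : ℝ) + 2 / (n : ℝ) ^ 2) ^ (n - 2)) ∧
    Tendsto (fun n : ℕ => Eval n (fun a : ZMod 2 => if a = 0 then n - 1 else 1))
      atTop (nhds (4 * Real.exp (-2))) := by
  exact ⟨fun n hn => CLAux.Eval_formula n hn, CLAux.limit_part⟩
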